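/- If a probability measure μ on [0,1] ∪ {∞} satisfies ∫_{[0,t]} s dμ(s) = μ([0,t])² for all t ∈ [0,1] and μ has an atom of mass c > 0 at some t ∈ [0,1], then c = 2(t/2 − μ([0,t))), i.e., c = t − 2μ([0,t)). -/

import Mathlib

open MeasureTheory Set
open scoped ENNReal

lemma sq_iSup_mono {a : ℕ → ℝ≥0∞} (ha : Monotone a) :
    (⨆ n, a n)^2 = ⨆ n, (a n)^2 := by
  rw [sq, ENNReal.iSup_mul]
  simp_rw [ENNReal.mul_iSup]
  apply le_antisymm
  · refine iSup_le fun n => iSup_le fun m => le_iSup_of_le (max n m) ?_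
    rw [sq]
    exact mul_le_mul' (ha (le_max_left n m)) (ha (le_max_right n m))
  · refine iSup_le fun n => le_iSup_of_le n (le_iSup_of_le n ?_)
    rw [sq]

theorem stmt4 (μ : Measure ℝ≥0∞) [IsProbabilityMeasure μ]
    (hconc : μ {x : ℝ≥0∞ | 1 < x ∧ x ≠ ⊤} = 0)
    (hRDE : ∀ t ∈ Set.Icc (0:ℝ) 1,
      ∫⁻ s in Set.Icc 0 (ENNReal.ofReal t), s ∂μ
        = (μ (Set.Icc 0 (ENNReal.ofReal t)))^2)
    (t : ℝ) (ht : t ∈ Set.Icc (0:ℝ) 1)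
    (hatom : 0 < μ {ENNReal.ofReal t}) :
    μ {ENNReal.ofReal t} + 2 * μ (Set.Ico 0 (ENNReal.ofReal t))
      = ENNReal.ofReal t := by
  obtain ⟨ht0, ht1⟩ := ht
  rcases eq_or_lt_of_le ht0 with h0 | h0
  · exfalso
    have h := hRDE 0 (by norm_num)
    rw [ENNReal.ofReal_zero, Set.Icc_self, lintegral_singleton] at h
    simp only [zero_mul] at h
    have : μ {(0:ℝ≥0∞)} = 0 := by
      have := h.symm
      rwa [pow_eq_zero_iff (by norm_num)] at this
    rw [← h0, ENNReal.ofReal_zero] at hatom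
    simp [this] at hatom
  -- main case: 0 < t
  set T := ENNReal.ofReal t with hT
  set u : ℕ → ℝ := fun n => t - t / (n + 2) with hu
  have hupos : ∀ n, 0 ≤ u n := by
    intro n
    have : t / (n + 2) ≤ t / 1 := by
      apply div_le_div_of_nonneg_left h0.le one_pos
      push_cast; linarith
    simp only [div_one] at this
    simp [hu]; linarith
  have hult : ∀ n, u n < t := by
    intro n
    have : 0 < t / (n + 2) := div_pos h0 (by positivity)
    simp [hu]; linarith
  have humono : Monotone u := by
    intro n m hnm
    simp only [hu]
    have : t / (m + 2) ≤ t / (n + 2) := by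
      apply div_le_div_of_nonneg_left h0.le (by positivity)
      have hcast : (n:ℝ) ≤ m := by exact_mod_cast hnm
      push_cast; linarith
    linarith
  have hSmono : Monotone (fun n => Set.Icc (0:ℝ≥0∞) (ENNReal.ofReal (u n))) := by
    intro n m hnm
    exact Set.Icc_subset_Icc le_rfl (ENNReal.ofReal_le_ofReal (humono hnm))
  have hUnion : ⋃ n, Set.Icc (0:ℝ≥0∞) (ENNReal.ofReal (u n)) = Set.Ico 0 T := by
    ext x
    simp only [Set.mem_iUnion, Set.mem_Icc, Set.mem_Ico, zero_le, true_and]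
    constructor
    · rintro ⟨n, hn⟩
      exact lt_of_le_of_lt hn (ENNReal.ofReal_lt_ofReal_iff h0 |>.mpr (hult n))
    · intro hx
      have hxne : x ≠ ⊤ := ne_top_of_lt hx
      have hxr : x.toReal < t := by
        rwa [hT, ENNReal.lt_ofReal_iff_toReal_lt hxne] at hx
      obtain ⟨n, hn⟩ := exists_nat_gt (t / (t - x.toReal))
      refine ⟨n, ?_⟩
      rw [← ENNReal.ofReal_toReal hxne]
      apply ENNReal.ofReal_le_ofReal
      have hpos : 0 < t - x.toReal := by linarith
      have h2 : t / (t - x.toReal) < (n:ℝ) + 2 := by linarith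
      have := (div_lt_iff₀ hpos).mp h2
      have : t / ((n:ℝ) + 2) < t - x.toReal := by
        rw [div_lt_iff₀ (by positivity)]
        linarith [mul_comm (t - x.toReal) ((n:ℝ)+2)]
      simp only [hu]; linarith
  -- measures
  set ν := μ.withDensity id with hν
  have hνapp : ∀ s : Set ℝ≥0∞, MeasurableSet s → ν s = ∫⁻ x in s, x ∂μ := by
    intro s hs
    rw [hν, withDensity_apply _ hs]; rfl
  have hA : ν (Set.Icc 0 T) = (μ (Set.Icc 0 T))^2 := by
    rw [hνapp _ measurableSet_Icc]; exact hRDE t ⟨ht0, ht1⟩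
  have hn : ∀ n, ν (Set.Icc 0 (ENNReal.ofReal (u n))) = (μ (Set.Icc 0 (ENNReal.ofReal (u n))))^2 := by
    intro n
    rw [hνapp _ measurableSet_Icc]
    exact hRDE (u n) ⟨hupos n, le_trans (hult n).le ht1⟩
  have hdir : Directed (· ⊆ ·) (fun n => Set.Icc (0:ℝ≥0∞) (ENNReal.ofReal (u n))) :=
    hSmono.directed_le
  have hνB : ν (Set.Ico 0 T) = ⨆ n, ν (Set.Icc 0 (ENNReal.ofReal (u n))) := by
    rw [← hUnion]; exact hdir.measure_iUnion
  have hμB : μ (Set.Ico 0 T) = ⨆ n, μ (Set.Icc 0 (ENNReal.ofReal (u n))) := by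
    rw [← hUnion]; exact hdir.measure_iUnion
  have hmonoμ : Monotone (fun n => μ (Set.Icc (0:ℝ≥0∞) (ENNReal.ofReal (u n)))) :=
    fun n m hnm => measure_mono (hSmono hnm)
  have hB : ν (Set.Ico 0 T) = (μ (Set.Ico 0 T))^2 := by
    rw [hνB, hμB, sq_iSup_mono hmonoμ]
    simp only [hn]
  -- split Icc = Ico ∪ {T}
  have hsplit : Set.Icc (0:ℝ≥0∞) T = Set.Ico 0 T ∪ {T} := by
    rw [Set.Ico_union_right zero_le]
  have hdisj : Disjoint (Set.Ico (0:ℝ≥0∞) T) {T} := by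
    simp [Set.disjoint_singleton_right]
  have hνsplit : ν (Set.Icc 0 T) = ν (Set.Ico 0 T) + ν {T} := by
    rw [hsplit, measure_union hdisj (measurableSet_singleton T)]
  have hμsplit : μ (Set.Icc 0 T) = μ (Set.Ico 0 T) + μ {T} := by
    rw [hsplit, measure_union hdisj (measurableSet_singleton T)]
  have hνT : ν {T} = T * μ {T} := by
    rw [hνapp _ (measurableSet_singleton T), lintegral_singleton]
  set B := μ (Set.Ico 0 T) with hBdef
  set c := μ {T} with hcdef
  have hBfin : B ≠ ⊤ := (measure_lt_top μ _).ne
  have hcfin : c ≠ ⊤ := (measure_lt_top μ _).ne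
  have key : B^2 + T * c = B^2 + c * (2 * B + c) := by
    have e1 : (B + c)^2 = B^2 + T * c := by
      rw [← hμsplit] at *
      calc (μ (Set.Icc 0 T))^2 = ν (Set.Icc 0 T) := hA.symm
        _ = ν (Set.Ico 0 T) + ν {T} := hνsplit
        _ = B^2 + T * c := by rw [hB, hνT]
    rw [← e1]; ring
  have key2 : T * c = c * (2 * B + c) :=
    (ENNReal.add_right_inj (ENNReal.pow_ne_top hBfin)).mp key
  have key3 : T = 2 * B + c := by
    have hc0 : c ≠ 0 := hatom.ne'
    rw [mul_comm c (2 * B + c)] at key2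
    exact (ENNReal.mul_left_strictMono hc0 hcfin).injective key2
  rw [key3]; ring
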